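/- arXiv:math/0502029 — 3 statements merged into one kernel-verified Lean document; each statement's English description precedes it below -/
import Mathlib

section
/- Let A be a 2m×m complex matrix and let φ : ℂ^m → (ℂ*)^{2m} be the group homomorphism φ(z) = (exp((Az)_1), …, exp((Az)_{2m})). Assume φ is injective and let G = φ(ℂ^m). Then G is a closed subset of (ℂ*)^{2m} if and only if the real 2m×2m matrix (Re A | Im A) is invertible. -/
/-- The group homomorphism `φ : ℂ^m → (ℂ*)^{2m}`, `φ(z) = (exp((Az)_1), …, exp((Az)_{2m}))`,
associated with a `2m × m` complex matrix `A`. -/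
noncomputable def expMap {m : ℕ} (A : Matrix (Fin (2 * m)) (Fin m) ℂ)
    (z : Fin m → ℂ) : Fin (2 * m) → ℂˣ :=
  fun k => Units.mk0 (Complex.exp (A.mulVec z k)) (Complex.exp_ne_zero _)

/-- The real `2m × 2m` matrix `(Re A | Im A)` whose first `m` columns are the real parts of
the columns of `A` and whose last `m` columns are the imaginary parts of the columns of `A`. -/
def reImMat {m : ℕ} (A : Matrix (Fin (2 * m)) (Fin m) ℂ) :
    Matrix (Fin (2 * m)) (Fin (2 * m)) ℝ :=
  Matrix.of fun i j =>
    if h : (j : ℕ) < m then (A i ⟨j, h⟩).re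
    else (A i ⟨(j : ℕ) - m, by omega⟩).im

namespace ExpMapAux

open Complex Matrix Set

variable {m : ℕ}

/-- componentwise exponential to units -/
noncomputable def ExpE (w : Fin (2 * m) → ℂ) : Fin (2 * m) → ℂˣ :=
  fun k => Units.mk0 (Complex.exp (w k)) (Complex.exp_ne_zero _)

theorem continuous_ExpE : Continuous (ExpE (m := m)) := by
  apply continuous_pi
  intro k
  rw [Units.continuous_iff]
  constructor
  · exact Complex.continuous_exp.comp (continuous_apply k)
  · have : (fun w : Fin (2*m) → ℂ => ((ExpE w k)⁻¹ : ℂˣ) : _ → ℂ)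
        = fun w => Complex.exp (-(w k)) := by
      funext w
      rw [Complex.exp_neg]
      rfl
    rw [this]
    exact Complex.continuous_exp.comp (continuous_apply k).neg

variable (A : Matrix (Fin (2 * m)) (Fin m) ℂ)

def S : Set (Fin (2 * m) → ℂ) := ExpE ⁻¹' (Set.range (expMap A))

theorem mem_S {w : Fin (2 * m) → ℂ} :
    w ∈ S A ↔ ∃ z, ∀ k, Complex.exp (w k) = Complex.exp (A.mulVec z k) := by
  constructor
  · rintro ⟨z, hz⟩
    exact ⟨z, fun k => by
      have := congrFun hz k
      simpa [expMap, ExpE, Units.ext_iff] using this.symm⟩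
  · rintro ⟨z, hz⟩
    exact ⟨z, by
      funext k
      exact Units.ext (by simpa [expMap, ExpE] using (hz k).symm)⟩

theorem isClosed_range_iff_isClosed_S :
    IsClosed (Set.range (expMap A) : Set (Fin (2 * m) → ℂˣ)) ↔ IsClosed (S A) := by
  constructor
  · intro h
    exact h.preimage continuous_ExpE
  · intro hS
    rw [← isOpen_compl_iff] at *
    rw [isOpen_iff_mem_nhds]
    intro u hu
    set w : Fin (2 * m) → ℂ := fun k => Complex.log (u k : ℂ) with hw
    have hexpw : ExpE w = u := by
      funext k
      exact Units.ext (by simpa [ExpE, w] using Complex.exp_log (Units.ne_zero (u k)))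
    have hwS : w ∈ (S A)ᶜ := by
      intro hmem
      exact hu (by simpa [S, hexpw] using hmem)
    set Ψ : (Fin (2 * m) → ℂˣ) → (Fin (2 * m) → ℂ) :=
      fun u' k => w k + Complex.log ((u' k : ℂ) / (u k : ℂ)) with hΨ
    have hΨu : Ψ u = w := by
      funext k
      simp [Ψ, div_self (Units.ne_zero _), Complex.log_one]
    have hΨc : ContinuousAt Ψ u := by
      rw [continuousAt_pi]
      intro k
      apply ContinuousAt.add continuousAt_const
      have h1 : ContinuousAt (fun u' : Fin (2 * m) → ℂˣ => ((u' k : ℂ) / (u k : ℂ))) u :=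
        ((Units.continuous_val.comp (continuous_apply k)).div_const _).continuousAt
      exact h1.clog (by
        simp only [div_self (Units.ne_zero (u k))]
        exact Complex.one_mem_slitPlane)
    have hexpΨ : ∀ u', ExpE (Ψ u') = u' := by
      intro u'
      funext k
      apply Units.ext
      show Complex.exp (w k + Complex.log ((u' k : ℂ) / (u k : ℂ))) = (u' k : ℂ)
      rw [Complex.exp_add, Complex.exp_log (div_ne_zero (Units.ne_zero _) (Units.ne_zero _))]
      show Complex.exp (Complex.log (u k : ℂ)) * _ = _
      rw [Complex.exp_log (Units.ne_zero _)]
      field_simp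
    have hnhds : Ψ ⁻¹' ((S A)ᶜ) ∈ nhds u := by
      apply hΨc.preimage_mem_nhds
      rw [hΨu]
      exact hS.mem_nhds hwS
    apply Filter.mem_of_superset hnhds
    intro u' hu' hmem
    exact hu' (by simpa [S, hexpΨ u'] using hmem)

/-- decode a real 2m-vector into a complex m-vector -/
noncomputable def cvec (m : ℕ) (u : Fin (2 * m) → ℝ) : Fin m → ℂ :=
  fun j => (u ⟨(j : ℕ), by omega⟩ : ℂ) - (u ⟨(j : ℕ) + m, by omega⟩ : ℂ) * Complex.I


theorem mulVec_reImMat (A : Matrix (Fin (2 * m)) (Fin m) ℂ) (u : Fin (2 * m) → ℝ) (i : Fin (2 * m)) :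
    (reImMat A).mulVec u i = (A.mulVec (cvec m u) i).re := by
  have hmm : m + m = 2 * m := (two_mul m).symm
  rw [Matrix.mulVec, dotProduct]
  rw [← Fin.sum_congr' (fun j => reImMat A i j * u j) hmm, Fin.sum_univ_add]
  have h1 : ∀ j : Fin m, reImMat A i (Fin.cast hmm (Fin.castAdd m j)) *
      u (Fin.cast hmm (Fin.castAdd m j)) = (A i j).re * u ⟨(j:ℕ), by omega⟩ := by
    intro j
    have hj : ((Fin.cast hmm (Fin.castAdd m j) : Fin (2*m)) : ℕ) = (j : ℕ) := rfl
    rw [reImMat]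
    simp only [Matrix.of_apply, hj, j.isLt, dif_pos]
    congr 1
  have h2 : ∀ j : Fin m, reImMat A i (Fin.cast hmm (Fin.natAdd m j)) *
      u (Fin.cast hmm (Fin.natAdd m j)) = (A i j).im * u ⟨(j:ℕ) + m, by omega⟩ := by
    intro j
    have hj : ((Fin.cast hmm (Fin.natAdd m j) : Fin (2*m)) : ℕ) = m + (j : ℕ) := rfl
    rw [reImMat]
    simp only [Matrix.of_apply, hj]
    rw [dif_neg (by omega)]
    have : m + (j:ℕ) - m = (j:ℕ) := by omega
    simp only [this]
    congr 2
    exact Fin.ext (by simp)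
  rw [Finset.sum_congr rfl (fun j _ => h1 j), Finset.sum_congr rfl (fun j _ => h2 j)]
  rw [Matrix.mulVec, dotProduct, Complex.re_sum]
  rw [← Finset.sum_add_distrib]
  apply Finset.sum_congr rfl
  intro j _
  simp [cvec, Complex.mul_re, Complex.sub_re, Complex.sub_im]

theorem cvec_eq_zero_iff {u : Fin (2 * m) → ℝ} : cvec m u = 0 ↔ u = 0 := by
  constructor
  · intro h
    funext j
    by_cases hj : (j : ℕ) < m
    · have h1 := congrArg Complex.re (congrFun h ⟨(j : ℕ), hj⟩)
      simpa [cvec, show (⟨(j : ℕ), by omega⟩ : Fin (2 * m)) = j from Fin.ext rfl] using h1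
    · have hj2 : (j : ℕ) - m < m := by omega
      have h1 := congrArg Complex.im (congrFun h ⟨(j : ℕ) - m, hj2⟩)
      simpa [cvec, show (⟨(j : ℕ) - m + m, by omega⟩ : Fin (2 * m)) = j from Fin.ext (by simp only [Fin.val_mk]; omega)]
        using h1
  · intro h
    subst h
    funext j
    simp [cvec]

theorem cvec_surjective : Function.Surjective (cvec m) := by
  intro z
  refine ⟨fun j => if h : (j : ℕ) < m then (z ⟨j, h⟩).re else -(z ⟨(j : ℕ) - m, by omega⟩).im, ?_⟩
  funext j
  have h1 : ((j : ℕ) : ℕ) < m := j.isLt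
  have h2 : ¬ ((j : ℕ) + m < m) := by omega
  simp only [cvec, dif_pos h1, dif_neg h2]
  have h3 : (j : ℕ) + m - m = (j : ℕ) := by omega
  simp only [h3]
  have h4 : (⟨(j : ℕ), h1⟩ : Fin m) = j := Fin.ext rfl
  rw [h4]
  push_cast
  simp [Complex.ext_iff]

theorem isUnit_reImMat_iff (A : Matrix (Fin (2 * m)) (Fin m) ℂ) :
    IsUnit (reImMat A) ↔ ∀ z : Fin m → ℂ, (∀ i, (A.mulVec z i).re = 0) → z = 0 := by
  constructor
  · intro hU z hz
    obtain ⟨u, hu⟩ := cvec_surjective z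
    have hMu : (reImMat A).mulVec u = 0 := by
      funext i
      rw [mulVec_reImMat, hu]
      exact hz i
    have hu0 : u = 0 := by
      by_contra h0
      have hdet : (reImMat A).det = 0 := Matrix.exists_mulVec_eq_zero_iff.mp ⟨u, h0, hMu⟩
      rw [Matrix.isUnit_iff_isUnit_det, hdet] at hU
      exact (by simpa using hU : False)
    rw [← hu, hu0]
    exact cvec_eq_zero_iff.mpr rfl
  · intro h
    rw [Matrix.isUnit_iff_isUnit_det, isUnit_iff_ne_zero]
    intro hdet
    obtain ⟨u, hu, hMu⟩ := Matrix.exists_mulVec_eq_zero_iff.mpr hdet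
    apply hu
    have hz : cvec m u = 0 := by
      apply h
      intro i
      rw [← mulVec_reImMat, hMu]
      rfl
    exact cvec_eq_zero_iff.mp hz

noncomputable def Alin (A : Matrix (Fin (2 * m)) (Fin m) ℂ) :
    (Fin m → ℂ) →ₗ[ℝ] (Fin (2 * m) → ℂ) :=
  (Matrix.mulVecLin A).restrictScalars ℝ

@[simp] theorem Alin_apply (A : Matrix (Fin (2 * m)) (Fin m) ℂ) (z : Fin m → ℂ) :
    Alin A z = A.mulVec z := rfl

noncomputable def iotaL : (Fin (2 * m) → ℝ) →ₗ[ℝ] (Fin (2 * m) → ℂ) where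
  toFun y := fun k => (y k : ℂ) * Complex.I
  map_add' x y := by
    funext k
    simp only [Pi.add_apply]
    push_cast
    ring
  map_smul' r y := by
    funext k
    simp [Complex.real_smul]
    push_cast
    ring

@[simp] theorem iotaL_apply (y : Fin (2 * m) → ℝ) (k : Fin (2 * m)) :
    iotaL y k = (y k : ℂ) * Complex.I := rfl

theorem iotaL_injective : Function.Injective (iotaL (m := m)) := by
  intro x y h
  funext k
  have := congrFun h k
  simpa [Complex.ext_iff] using this

/-- the purely imaginary subspace -/
noncomputable def Wsub : Submodule ℝ (Fin (2 * m) → ℂ) where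
  carrier := {w | ∀ i, (w i).re = 0}
  add_mem' := fun ha hb i => by simp [ha i, hb i]
  zero_mem' := fun i => by simp
  smul_mem' := fun r w hw i => by
    have := hw i
    simp [Complex.real_smul, Complex.mul_re, this]

theorem range_iotaL : LinearMap.range (iotaL (m := m)) = Wsub := by
  ext w
  constructor
  · rintro ⟨y, rfl⟩ i
    simp
  · intro hw
    refine ⟨fun k => (w k).im, ?_⟩
    funext k
    apply Complex.ext <;> simp [hw k]

variable (A : Matrix (Fin (2 * m)) (Fin m) ℂ)

theorem Alin_injective (hinj : Function.Injective (expMap A)) :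
    Function.Injective (Alin A) := by
  intro z z' h
  apply hinj
  have h' : A.mulVec z = A.mulVec z' := h
  funext k
  exact Units.ext (by simp [expMap, h'])

theorem isClosed_S_of_isUnit (hinj : Function.Injective (expMap A))
    (hU : IsUnit (reImMat A)) : IsClosed (S A) := by
  classical
  have hkey := (isUnit_reImMat_iff A).mp hU
  set V := LinearMap.range (Alin A) with hVdef
  set W := Wsub (m := m) with hWdef
  have hdisj : V ⊓ W = ⊥ := by
    rw [eq_bot_iff]
    rintro x ⟨hxV, hxW⟩
    obtain ⟨z, rfl⟩ := hxV
    have : z = 0 := hkey z (fun i => hxW i)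
    simp [this, Submodule.mem_bot]
  have h4m : Module.finrank ℝ (Fin (2 * m) → ℂ) = 4 * m := by
    simp [Module.finrank_pi_fintype, Complex.finrank_real_complex, Finset.sum_const,
      Fintype.card_fin]
    omega
  have hVrk : Module.finrank ℝ V = 2 * m := by
    rw [LinearMap.finrank_range_of_inj (Alin_injective A hinj)]
    simp [Module.finrank_pi_fintype, Complex.finrank_real_complex, Finset.sum_const,
      Fintype.card_fin]
    omega
  have hWrk : Module.finrank ℝ W = 2 * m := by
    rw [hWdef, ← range_iotaL, LinearMap.finrank_range_of_inj iotaL_injective]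
    simp [Module.finrank_pi_fintype, Finset.sum_const, Fintype.card_fin]
  have htop : V ⊔ W = ⊤ := by
    apply Submodule.eq_top_of_finrank_eq
    have hh := Submodule.finrank_sup_add_finrank_inf_eq V W
    rw [hdisj, finrank_bot] at hh
    omega
  have hcompl : IsCompl V W := ⟨disjoint_iff.mpr hdisj, codisjoint_iff.mpr htop⟩
  set P0 := W.projectionOnto V hcompl.symm with hP0
  set P : (Fin (2 * m) → ℂ) →ₗ[ℝ] (Fin (2 * m) → ℂ) := W.subtype.comp P0 with hP
  have hPker : ∀ x ∈ V, P x = 0 := by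
    intro x hx
    simp [hP, hP0, Submodule.projectionOnto_apply_of_mem_right hcompl.symm hx]
  have hPW : ∀ x ∈ W, P x = x := by
    intro x hx
    have := Submodule.projectionOnto_apply_left hcompl.symm ⟨x, hx⟩
    exact congrArg Subtype.val this
  have hSeq : S A = P ⁻¹' {w | ∀ k, Complex.exp (w k) = 1} := by
    ext w
    simp only [mem_S, Set.mem_preimage, Set.mem_setOf_eq]
    constructor
    · rintro ⟨z, hz⟩
      have hv : ∀ k, Complex.exp ((w - A.mulVec z) k) = 1 := by
        intro k
        simp [Complex.exp_sub, hz k, div_self (Complex.exp_ne_zero _)]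
      have hvW : (w - A.mulVec z) ∈ W := by
        intro i
        obtain ⟨n, hn⟩ := Complex.exp_eq_one_iff.mp (hv i)
        rw [hn]
        simp [Complex.mul_re]
      have hPw : P w = w - A.mulVec z := by
        have hw : w = Alin A z + (w - A.mulVec z) := by
          simp
        conv_lhs => rw [hw, map_add, hPker _ (LinearMap.mem_range_self _ _), hPW _ hvW]
        rw [zero_add]
      intro k
      rw [hPw]
      exact hv k
    · intro h
      have hker : w - P w ∈ V := by
        have h1 : P0 (w - P w) = 0 := by
          have h2 : P0 (P w) = P0 w := by
            have := Submodule.projectionOnto_apply_left hcompl.symm (P0 w)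
            exact this
          rw [map_sub, h2, sub_self]
        have := Submodule.ker_projectionOnto hcompl.symm
        rw [← this]
        exact h1
      obtain ⟨z, hz⟩ := hker
      refine ⟨z, fun k => ?_⟩
      have hwk : w k = A.mulVec z k + P w k := by
        have h5 : A.mulVec z k = w k - P w k := by
          have := congrFun hz k
          simpa using this
        rw [h5]
        ring
      rw [hwk, Complex.exp_add, h k, mul_one]
  rw [hSeq]
  have hclosed : IsClosed {w : Fin (2 * m) → ℂ | ∀ k, Complex.exp (w k) = 1} := by
    have : {w : Fin (2 * m) → ℂ | ∀ k, Complex.exp (w k) = 1}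
        = ⋂ k, {w | Complex.exp (w k) = 1} := by
      ext w; simp [Set.mem_iInter]
    rw [this]
    exact isClosed_iInter fun k =>
      isClosed_eq (Complex.continuous_exp.comp (continuous_apply k)) continuous_const
  exact hclosed.preimage (LinearMap.continuous_of_finiteDimensional P)

theorem finite_of_separated {d : ℕ} {T : Set (Fin d → ℝ)} {R ε : ℝ} (hε : 0 < ε)
    (hTb : T ⊆ Metric.closedBall 0 R)
    (hTs : ∀ x ∈ T, ∀ y ∈ T, x ≠ y → ε ≤ dist x y) : T.Finite := by
  have htb : TotallyBounded T :=
    (isCompact_closedBall (0 : Fin d → ℝ) R).totallyBounded.subset hTb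
  obtain ⟨t, htf, hcov⟩ := Metric.totallyBounded_iff.mp htb (ε / 2) (by linarith)
  have hch : ∀ x : T, ∃ c ∈ t, (x : Fin d → ℝ) ∈ Metric.ball c (ε / 2) := by
    intro x
    have := hcov x.2
    simpa using this
  choose f hf1 hf2 using hch
  haveI : Finite t := htf.to_subtype
  have hfinj : Function.Injective (fun x : T => (⟨f x, hf1 x⟩ : t)) := by
    intro x y hxy
    have hcc : f x = f y := congrArg Subtype.val hxy
    by_contra hne
    have hne' : (x : Fin d → ℝ) ≠ (y : Fin d → ℝ) := fun h => hne (Subtype.ext h)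
    have hsep := hTs x x.2 y y.2 hne'
    have d1 := Metric.mem_ball.mp (hf2 x)
    have d2 := Metric.mem_ball.mp (hf2 y)
    rw [hcc] at d1
    have : dist (x : Fin d → ℝ) (y : Fin d → ℝ) < ε := by
      calc dist (x : Fin d → ℝ) (y : Fin d → ℝ)
          ≤ dist (x : Fin d → ℝ) (f y) + dist (y : Fin d → ℝ) (f y) := dist_triangle_right _ _ _
        _ < ε / 2 + ε / 2 := add_lt_add d1 d2
        _ = ε := by ring
    linarith
  have : Finite T := Finite.of_injective _ hfinj
  exact Set.finite_coe_iff.mp this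

theorem ell_sub (n n' : Fin (2 * m) → ℤ) :
    (fun k => ((n - n') k : ℝ) * (2 * Real.pi)) =
      (fun k => ((n k : ℝ)) * (2 * Real.pi)) - (fun k => ((n' k : ℝ)) * (2 * Real.pi)) := by
  funext k
  simp only [Pi.sub_apply, Int.cast_sub]
  ring

theorem isUnit_of_isClosed_S (A : Matrix (Fin (2 * m)) (Fin m) ℂ)
    (hinj : Function.Injective (expMap A)) (hcl : IsClosed (S A)) :
    IsUnit (reImMat A) := by
  classical
  by_contra hU
  have hker : ¬ ∀ z : Fin m → ℂ, (∀ i, (A.mulVec z i).re = 0) → z = 0 :=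
    fun h => hU ((isUnit_reImMat_iff A).mpr h)
  push_neg at hker
  obtain ⟨z₀, hz₀re, hz₀⟩ := hker
  set ℓ : (Fin (2 * m) → ℤ) → (Fin (2 * m) → ℝ) :=
    fun n k => ((n k : ℝ)) * (2 * Real.pi) with hℓdef
  have hℓsub : ∀ n n', ℓ (n - n') = ℓ n - ℓ n' := fun n n' => ell_sub n n'
  have hℓzero : ℓ 0 = 0 := by funext k; simp [hℓdef]
  set U : Submodule ℝ (Fin (2 * m) → ℝ) :=
    Submodule.comap iotaL (LinearMap.range (Alin A)) with hUdef
  set C : Set (Fin (2 * m) → ℝ) := iotaL ⁻¹' (S A) with hCdef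
  have hCclosed : IsClosed C := hcl.preimage (LinearMap.continuous_of_finiteDimensional iotaL)
  have hUclosed : IsClosed (U : Set (Fin (2 * m) → ℝ)) := Submodule.closed_of_finiteDimensional U
  -- membership characterization of C
  have memC : ∀ y, y ∈ C ↔ ∃ n : Fin (2 * m) → ℤ, y - ℓ n ∈ U := by
    intro y
    constructor
    · intro hy
      obtain ⟨z, hz⟩ := (mem_S A).mp hy
      have hkn : ∀ k, ∃ n : ℤ, iotaL y k = A.mulVec z k + n * (2 * Real.pi * Complex.I) :=
        fun k => Complex.exp_eq_exp_iff_exists_int.mp (hz k)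
      choose n hn using hkn
      have hre : ∀ k, (A.mulVec z k).re = 0 := by
        intro k
        have h1 := congrArg Complex.re (hn k)
        simpa [Complex.mul_re] using h1.symm
      have hy' : iotaL (fun k => (A.mulVec z k).im) = A.mulVec z := by
        funext k
        apply Complex.ext <;> simp [hre k]
      refine ⟨n, ?_⟩
      have heq : y - ℓ n = fun k => (A.mulVec z k).im := by
        funext k
        have hAzk : A.mulVec z k = (((A.mulVec z k).im : ℝ) : ℂ) * Complex.I := by
          apply Complex.ext <;> simp [hre k]
        have him : ((y k : ℝ) : ℂ)
            = (((A.mulVec z k).im + (n k : ℝ) * (2 * Real.pi) : ℝ) : ℂ) := by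
          have h9 := hn k
          rw [hAzk] at h9
          have h10 : ((y k : ℝ) : ℂ) * Complex.I
              = ((((A.mulVec z k).im + (n k : ℝ) * (2 * Real.pi) : ℝ)) : ℂ) * Complex.I := by
            rw [show iotaL y k = ((y k : ℝ) : ℂ) * Complex.I from rfl] at h9
            rw [h9]
            push_cast
            ring
          exact mul_right_cancel₀ Complex.I_ne_zero h10
        have him' : y k = (A.mulVec z k).im + (n k : ℝ) * (2 * Real.pi) := by exact_mod_cast him
        simp only [Pi.sub_apply, hℓdef]
        rw [him']
        ring
      rw [heq, hUdef]
      exact ⟨z, hy'.symm⟩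
    · rintro ⟨n, hnU⟩
      obtain ⟨z, hz⟩ := hnU
      apply (mem_S A).mpr
      refine ⟨z, fun k => ?_⟩
      have h1 : iotaL y k = A.mulVec z k + ((n k : ℂ) * (2 * Real.pi * Complex.I)) := by
        have h2 := congrFun hz k
        simp only [Alin_apply] at h2
        have h3 : iotaL (y - ℓ n) k = ((y k : ℂ) - (ℓ n k : ℂ)) * Complex.I := by
          simp [Complex.ofReal_sub]
        rw [h3] at h2
        have h4 : iotaL y k = (y k : ℂ) * Complex.I := rfl
        rw [h4, h2]
        simp only [hℓdef]
        push_cast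
        ring
      rw [h1, Complex.exp_add, Complex.exp_int_mul_two_pi_mul_I, mul_one]
  have hCgrp : ∀ y₁ ∈ C, ∀ y₂ ∈ C, y₁ - y₂ ∈ C := by
    intro y₁ h₁ y₂ h₂
    obtain ⟨n₁, hn₁⟩ := (memC y₁).mp h₁
    obtain ⟨n₂, hn₂⟩ := (memC y₂).mp h₂
    apply (memC _).mpr
    refine ⟨n₁ - n₂, ?_⟩
    rw [hℓsub]
    have : y₁ - y₂ - (ℓ n₁ - ℓ n₂) = (y₁ - ℓ n₁) - (y₂ - ℓ n₂) := by abel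
    rw [this]
    exact U.sub_mem hn₁ hn₂
  have hℓU : ∀ n : Fin (2 * m) → ℤ, ℓ n ∈ U → n = 0 := by
    intro n hn
    obtain ⟨z, hz⟩ := hn
    have h1 : expMap A z = expMap A 0 := by
      funext k
      apply Units.ext
      show Complex.exp (A.mulVec z k) = Complex.exp (A.mulVec 0 k)
      have h2 : A.mulVec z k = (n k : ℂ) * (2 * Real.pi * Complex.I) := by
        have h3 := congrFun hz k
        simp only [Alin_apply] at h3
        rw [h3]
        simp only [iotaL_apply, hℓdef]
        push_cast
        ring
      rw [h2, Complex.exp_int_mul_two_pi_mul_I, Matrix.mulVec_zero]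
      simp
    have hz0 : z = 0 := hinj h1
    rw [hz0] at hz
    have h4 : iotaL (ℓ n) = iotaL 0 := by
      rw [← hz]
      simp
    have h5 : ℓ n = 0 := iotaL_injective h4
    funext k
    have h6 := congrFun h5 k
    simp only [hℓdef, Pi.zero_apply] at h6
    have h7 : (n k : ℝ) = 0 := by
      rcases mul_eq_zero.mp h6 with h | h
      · exact h
      · exfalso; have := Real.pi_ne_zero; simp at h
    exact_mod_cast h7
  have hC0 : (0 : Fin (2 * m) → ℝ) ∈ C := by
    apply (memC 0).mpr
    exact ⟨0, by simpa [hℓzero] using U.zero_mem⟩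
  -- Baire category argument
  haveI : CompleteSpace C := hCclosed.completeSpace_coe
  haveI : Nonempty C := ⟨⟨0, hC0⟩⟩
  set f : (Fin (2 * m) → ℤ) → Set C := fun n => {x : C | (x : Fin (2 * m) → ℝ) - ℓ n ∈ U}
    with hfdef
  have hfc : ∀ n, IsClosed (f n) := by
    intro n
    have : f n = (Subtype.val : C → _) ⁻¹' ((fun y => y - ℓ n) ⁻¹' (U : Set _)) := rfl
    rw [this]
    exact (hUclosed.preimage (continuous_sub_right _)).preimage continuous_subtype_val
  have hfU : ⋃ n, f n = Set.univ := by
    ext x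
    simp only [Set.mem_iUnion, Set.mem_univ, iff_true, hfdef, Set.mem_setOf_eq]
    exact (memC x).mp x.2
  obtain ⟨n₀, hn₀⟩ := nonempty_interior_of_iUnion_of_closed hfc hfU
  obtain ⟨x₀, hx₀⟩ := hn₀
  have hx₀f : x₀ ∈ f n₀ := interior_subset hx₀
  obtain ⟨ε, hεpos, hball⟩ := Metric.mem_nhds_iff.mp (mem_interior_iff_mem_nhds.mp hx₀)
  have hsmall : ∀ c ∈ C, ‖c‖ < ε → c ∈ U := by
    intro c hc hcn
    have hnegC : (0 : Fin (2 * m) → ℝ) - c ∈ C := hCgrp 0 hC0 c hc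
    have hyC : (x₀ : Fin (2 * m) → ℝ) + c ∈ C := by
      have h1 := hCgrp _ x₀.2 _ hnegC
      have h2 : (x₀ : Fin (2 * m) → ℝ) - (0 - c) = (x₀ : Fin (2 * m) → ℝ) + c := by abel
      rwa [h2] at h1
    have hmem : (⟨_, hyC⟩ : C) ∈ Metric.ball x₀ ε := by
      rw [Metric.mem_ball, Subtype.dist_eq, dist_eq_norm]
      have h3 : (x₀ : Fin (2 * m) → ℝ) + c - (x₀ : Fin (2 * m) → ℝ) = c := by abel
      rw [h3]
      exact hcn
    have h4 : (x₀ : Fin (2 * m) → ℝ) + c - ℓ n₀ ∈ U := hball hmem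
    have h5 : (x₀ : Fin (2 * m) → ℝ) - ℓ n₀ ∈ U := hx₀f
    have h6 := U.sub_mem h4 h5
    have h7 : (x₀ : Fin (2 * m) → ℝ) + c - ℓ n₀ - ((x₀ : Fin (2 * m) → ℝ) - ℓ n₀) = c := by abel
    rwa [h7] at h6
  have hsep : ∀ n : Fin (2 * m) → ℤ, n ≠ 0 → ∀ u ∈ U, ε ≤ ‖ℓ n - u‖ := by
    intro n hn u hu
    by_contra hlt
    push_neg at hlt
    have hℓC : ℓ n ∈ C := (memC _).mpr ⟨n, by simpa using U.zero_mem⟩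
    have huC : u ∈ C := (memC _).mpr ⟨0, by simpa [hℓzero] using hu⟩
    have hd : ℓ n - u ∈ C := hCgrp _ hℓC _ huC
    have h8 := hsmall _ hd hlt
    have h9 : ℓ n ∈ U := by
      have := U.add_mem h8 hu
      rwa [sub_add_cancel] at this
    exact hn (hℓU n h9)
  -- projection onto a complement of U
  obtain ⟨U', hcompl'⟩ := Submodule.exists_isCompl U
  set P : (Fin (2 * m) → ℝ) →ₗ[ℝ] (Fin (2 * m) → ℝ) :=
    U'.subtype.comp (U'.linearProjOfIsCompl U hcompl'.symm) with hPdef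
  have hPsub : ∀ x, x - P x ∈ U := by
    intro x
    have h1 : U'.linearProjOfIsCompl U hcompl'.symm (x - P x) = 0 := by
      rw [map_sub]
      have h2 := Submodule.linearProjOfIsCompl_apply_left hcompl'.symm
        (U'.linearProjOfIsCompl U hcompl'.symm x)
      have h3 : U'.linearProjOfIsCompl U hcompl'.symm (P x)
          = U'.linearProjOfIsCompl U hcompl'.symm x := h2
      rw [h3, sub_self]
    have h4 := Submodule.linearProjOfIsCompl_ker hcompl'.symm
    rw [← h4]
    exact h1
  have hPmem : ∀ x, P x ∈ U' := fun x => (U'.linearProjOfIsCompl U hcompl'.symm x).2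
  have hPsep : ∀ n : Fin (2 * m) → ℤ, n ≠ 0 → ε ≤ ‖P (ℓ n)‖ := by
    intro n hn
    have := hsep n hn (ℓ n - P (ℓ n)) (hPsub _)
    rwa [sub_sub_cancel] at this
  -- ranks
  have hFrk : Module.finrank ℝ (Fin (2 * m) → ℝ) = 2 * m := by
    simp [Module.finrank_pi_fintype, Finset.sum_const, Fintype.card_fin]
  have hUne : U ≠ ⊥ := by
    set y₀ : Fin (2 * m) → ℝ := fun k => (A.mulVec z₀ k).im with hy₀def
    have hy₀ : iotaL y₀ = A.mulVec z₀ := by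
      funext k
      apply Complex.ext <;> simp [hy₀def, hz₀re k]
    have hy₀U : y₀ ∈ U := ⟨z₀, hy₀.symm⟩
    have hy₀ne : y₀ ≠ 0 := by
      intro h0
      apply hz₀
      apply Alin_injective A hinj
      rw [map_zero]
      rw [show Alin A z₀ = A.mulVec z₀ from rfl, ← hy₀, h0, map_zero]
    intro hbot
    rw [hbot] at hy₀U
    exact hy₀ne ((Submodule.mem_bot ℝ).mp hy₀U)
  have hU'rk : Module.finrank ℝ U' < 2 * m := by
    have h1 := Submodule.finrank_add_eq_of_isCompl hcompl'
    rw [hFrk] at h1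
    have h2 : Module.finrank ℝ U ≠ 0 := by
      intro h0
      exact hUne (Submodule.finrank_eq_zero.mp h0)
    omega
  -- construct a linear dependence among projections of the standard periods
  set b : Fin (2 * m) → (Fin (2 * m) → ℝ) :=
    fun k j => if j = k then 2 * Real.pi else 0 with hbdef
  set g : Fin (2 * m) → (Fin (2 * m) → ℝ) := fun k => P (b k) with hgdef
  have hgU' : ∀ k, g k ∈ U' := fun k => hPmem _
  have hℓsum : ∀ n : Fin (2 * m) → ℤ, ℓ n = ∑ k, (n k : ℝ) • b k := by
    intro n
    funext j
    rw [Finset.sum_apply]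
    rw [Finset.sum_eq_single j]
    · simp [hbdef, hℓdef]
    · intro k _ hk
      simp [hbdef, if_neg (Ne.symm hk)]
    · intro h
      exact absurd (Finset.mem_univ j) h
  have hPℓ : ∀ n : Fin (2 * m) → ℤ, P (ℓ n) = ∑ k, (n k : ℝ) • g k := by
    intro n
    rw [hℓsum, map_sum]
    apply Finset.sum_congr rfl
    intro k _
    rw [_root_.map_smul]
  have hnli : ¬ LinearIndependent ℝ g := by
    intro hli
    have h1 : Module.finrank ℝ (Submodule.span ℝ (Set.range g)) = 2 * m := by
      rw [finrank_span_eq_card hli, Fintype.card_fin]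
    have h2 : Submodule.span ℝ (Set.range g) ≤ U' := by
      rw [Submodule.span_le]
      rintro _ ⟨k, rfl⟩
      exact hgU' k
    have h3 := Submodule.finrank_mono h2
    omega
  obtain ⟨c, hcsum, j, hcj⟩ := Fintype.not_linearIndependent_iff.mp hnli
  -- rounding argument
  set R : ℝ := ∑ k, (1 / 2) * ‖g k‖ with hRdef
  set N : ℝ → (Fin (2 * m) → ℤ) := fun t k => round (t * c k) with hNdef
  set hfun : ℝ → (Fin (2 * m) → ℝ) := fun t => P (ℓ (N t)) with hfundef
  have hbound : ∀ t, ‖hfun t‖ ≤ R := by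
    intro t
    rw [hfundef]
    simp only []
    rw [hPℓ]
    have hsum0 : ∑ k, (t * c k) • g k = 0 := by
      have h6 : ∑ k, (t * c k) • g k = t • ∑ k, c k • g k := by
        rw [Finset.smul_sum]
        apply Finset.sum_congr rfl
        intro k _
        rw [smul_smul]
      rw [h6, hcsum, smul_zero]
    have h7 : ∑ k, ((N t k : ℝ)) • g k = ∑ k, ((N t k : ℝ) - t * c k) • g k := by
      have h8 : ∑ k, ((N t k : ℝ)) • g k
          = ∑ k, (((N t k : ℝ) - t * c k) • g k + (t * c k) • g k) := by
        apply Finset.sum_congr rfl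
        intro k _
        rw [← add_smul]
        ring_nf
      rw [h8, Finset.sum_add_distrib, hsum0, add_zero]
    rw [h7]
    calc ‖∑ k, ((N t k : ℝ) - t * c k) • g k‖
        ≤ ∑ k, ‖((N t k : ℝ) - t * c k) • g k‖ := norm_sum_le _ _
      _ ≤ R := by
          rw [hRdef]
          apply Finset.sum_le_sum
          intro k _
          rw [norm_smul, Real.norm_eq_abs]
          have h9 : |(N t k : ℝ) - t * c k| ≤ 1 / 2 := by
            have := abs_sub_round (t * c k)
            rwa [abs_sub_comm] at this
          exact mul_le_mul_of_nonneg_right h9 (norm_nonneg _)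
  have hNinj : ∀ s t, hfun s = hfun t → N s = N t := by
    intro s t hst
    by_contra hne
    have hnz : N s - N t ≠ 0 := fun h => hne (by rwa [sub_eq_zero] at h)
    have h10 := hPsep (N s - N t) hnz
    rw [hℓsub, map_sub] at h10
    have h11 : P (ℓ (N s)) - P (ℓ (N t)) = hfun s - hfun t := rfl
    rw [h11, hst, sub_self, norm_zero] at h10
    linarith
  set θ : ℤ → (Fin (2 * m) → ℝ) := fun q => hfun ((q : ℝ) / c j) with hθdef
  have hθinj : Function.Injective θ := by
    intro q q' hqq
    have h12 := hNinj _ _ hqq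
    have h13 := congrFun h12 j
    simp only [hNdef] at h13
    rw [div_mul_cancel₀ _ hcj, div_mul_cancel₀ _ hcj, round_intCast, round_intCast] at h13
    exact h13
  have hTinf := Set.infinite_range_of_injective hθinj
  apply hTinf
  apply finite_of_separated hεpos (R := R)
  · rintro x ⟨q, rfl⟩
    rw [Metric.mem_closedBall, dist_zero_right]
    exact hbound _
  · rintro x ⟨q, rfl⟩ y ⟨q', rfl⟩ hne
    have hNne : N ((q : ℝ) / c j) ≠ N ((q' : ℝ) / c j) := by
      intro hNe
      apply hne
      rw [hθdef]
      simp only [hfundef]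
      rw [hNe]
    have hnz : N ((q : ℝ) / c j) - N ((q' : ℝ) / c j) ≠ 0 :=
      fun h => hNne (by rwa [sub_eq_zero] at h)
    have h14 := hPsep _ hnz
    rw [hℓsub, map_sub] at h14
    rw [dist_eq_norm]
    exact h14

end ExpMapAux

/-- Let `A` be a `2m × m` complex matrix and `φ : ℂ^m → (ℂ*)^{2m}`,
`φ(z) = (exp((Az)_1), …, exp((Az)_{2m}))`, assumed injective.  Then the image
`G = φ(ℂ^m)` is closed in `(ℂ*)^{2m}` if and only if the real `2m × 2m` matrix
`(Re A | Im A)` is invertible. -/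
theorem isClosed_range_expMap_iff_isUnit_reImMat
    (m : ℕ) (A : Matrix (Fin (2 * m)) (Fin m) ℂ)
    (hinj : Function.Injective (expMap A)) :
    IsClosed (Set.range (expMap A) : Set (Fin (2 * m) → ℂˣ)) ↔ IsUnit (reImMat A) := by
  rw [ExpMapAux.isClosed_range_iff_isClosed_S A]
  exact ⟨fun h => ExpMapAux.isUnit_of_isClosed_S A hinj h,
    fun h => ExpMapAux.isClosed_S_of_isUnit A hinj h⟩
end

section
/- Let W be a real linear subspace of ℂ^k and let exp : ℂ^k → (ℂ*)^k denote the componentwise complex exponential (a surjective group homomorphism with kernel (2πi ℤ)^k). Assume W ∩ (2πi ℤ)^k = {0}. Then exp(W) is a closed subset of (ℂ*)^k if and only if W ∩ (iℝ)^k = {0}, where (iℝ)^k denotes the set of vectors in ℂ^k all of whose coordinates are purely imaginary. -/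
open Complex

/-- The componentwise complex exponential `exp : ℂ^k → (ℂ*)^k`. -/
noncomputable def expPi {k : ℕ} (v : Fin k → ℂ) : Fin k → ℂˣ :=
  fun i => Units.mk0 (Complex.exp (v i)) (Complex.exp_ne_zero _)

open Topology Filter

lemma unitsValOpenEmb : IsOpenEmbedding (Units.val : ℂˣ → ℂ) := by
  refine ⟨Units.isEmbedding_val₀, ?_⟩
  have : Set.range (Units.val : ℂˣ → ℂ) = {0}ᶜ := by
    ext z
    constructor
    · rintro ⟨u, rfl⟩; exact u.ne_zero
    · intro h; exact ⟨Units.mk0 z h, rfl⟩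
  rw [this]; exact isOpen_compl_singleton

lemma continuous_expPi {k : ℕ} : Continuous (expPi (k := k)) := by
  refine continuous_pi fun i => ?_
  rw [Units.continuous_iff]
  constructor
  · exact Complex.continuous_exp.comp (continuous_apply i)
  · have : (fun v : Fin k → ℂ => (((expPi v i)⁻¹ : ℂˣ) : ℂ)) = fun v => Complex.exp (-(v i)) := by
      funext v; simp [expPi, ← Complex.exp_neg]
    rw [this]
    exact Complex.continuous_exp.comp (continuous_apply i).neg

lemma expPi_add {k : ℕ} (v w : Fin k → ℂ) : expPi (v + w) = expPi v * expPi w := by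
  funext i
  ext
  simp [expPi, Complex.exp_add]

lemma expPi_zero {k : ℕ} : expPi (0 : Fin k → ℂ) = 1 := by
  funext i; ext; simp [expPi]

lemma expPi_inj {k : ℕ} (W : Submodule ℝ (Fin k → ℂ))
    (hW : ∀ v ∈ W, (∀ i : Fin k, ∃ q : ℤ, v i = 2 * Real.pi * Complex.I * q) → v = 0)
    {v w : Fin k → ℂ} (hv : v ∈ W) (hw : w ∈ W) (h : expPi v = expPi w) : v = w := by
  have hvw : v - w ∈ W := W.sub_mem hv hw
  have h0 : v - w = 0 := by
    refine hW _ hvw fun i => ?_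
    have h1 : Complex.exp (v i) = Complex.exp (w i) := by
      have := congrArg (fun u => ((u i : ℂˣ) : ℂ)) h
      simpa [expPi] using this
    have h2 : Complex.exp (v i - w i) = 1 := by
      rw [Complex.exp_sub, h1, div_self (Complex.exp_ne_zero _)]
    obtain ⟨n, hn⟩ := Complex.exp_eq_one_iff.1 h2
    exact ⟨n, by rw [Pi.sub_apply, hn]; ring⟩
  exact sub_eq_zero.1 h0

lemma closed_of_re_inj {k : ℕ} (W : Submodule ℝ (Fin k → ℂ))
    (h : ∀ v ∈ W, (∀ i : Fin k, (v i).re = 0) → v = 0) :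
    IsClosed (expPi '' (W : Set (Fin k → ℂ)) : Set (Fin k → ℂˣ)) := by
  haveI : FirstCountableTopology ℂˣ :=
    Units.isEmbedding_val₀.isInducing.firstCountableTopology
  let reL : (Fin k → ℂ) →ₗ[ℝ] (Fin k → ℝ) :=
    LinearMap.pi fun i => Complex.reLm.comp (LinearMap.proj i)
  let g : W →ₗ[ℝ] (Fin k → ℝ) := reL.comp W.subtype
  have hg : Function.Injective g := by
    intro x y hxy
    have hmem : (x : Fin k → ℂ) - y ∈ W := W.sub_mem x.2 y.2
    have h0 : (x : Fin k → ℂ) - y = 0 := by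
      refine h _ hmem fun i => ?_
      have := congrFun hxy i
      simp only [g, reL, LinearMap.comp_apply, LinearMap.pi_apply, LinearMap.proj_apply,
        Complex.reLm_coe, Submodule.subtype_apply] at this
      simp [Complex.sub_re, this]
    exact Subtype.ext (sub_eq_zero.1 h0)
  refine IsSeqClosed.isClosed ?_
  rintro u p hu hup
  choose w hwW hwe using hu
  have hval : ∀ i, Filter.Tendsto (fun n => Complex.exp (w n i)) Filter.atTop (𝓝 ((p i : ℂ))) := by
    intro i
    have : Filter.Tendsto (fun n => ((u n i : ℂˣ) : ℂ)) Filter.atTop (𝓝 ((p i : ℂ))) :=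
      (Units.continuous_val.tendsto _).comp ((continuous_apply i).continuousAt.tendsto.comp hup)
    simpa [← hwe, expPi] using this
  set r : Fin k → ℝ := fun i => Real.log (‖(p i : ℂ)‖)
  have hre : Filter.Tendsto (fun n => g ⟨w n, hwW n⟩) Filter.atTop (𝓝 r) := by
    rw [tendsto_pi_nhds]
    intro i
    have h1 : Filter.Tendsto (fun n => ‖Complex.exp (w n i)‖) Filter.atTop
        (𝓝 (‖(p i : ℂ)‖)) :=
      (continuous_norm.tendsto _).comp (hval i)
    have h2 : Filter.Tendsto (fun n => Real.log (‖Complex.exp (w n i)‖)) Filter.atTop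
        (𝓝 (Real.log (‖(p i : ℂ)‖))) :=
      ((Real.continuousAt_log (norm_ne_zero_iff.mpr (p i).ne_zero)).tendsto).comp h1
    have h3 : ∀ n, Real.log (‖Complex.exp (w n i)‖) = (w n i).re := by
      intro n; rw [Complex.norm_exp, Real.log_exp]
    simp only [h3] at h2
    convert h2 using 1
    rfl
  have hrange : IsClosed ((LinearMap.range g : Submodule ℝ (Fin k → ℝ)) : Set (Fin k → ℝ)) :=
    Submodule.closed_of_finiteDimensional _
  have hrmem : r ∈ LinearMap.range g :=
    hrange.mem_of_tendsto hre (Filter.Eventually.of_forall fun n => ⟨_, rfl⟩)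
  let e : W ≃ₗ[ℝ] LinearMap.range g := LinearEquiv.ofInjective g hg
  have hsymm_cont : Continuous (e.symm : LinearMap.range g → W) :=
    LinearMap.continuous_of_finiteDimensional (e.symm : LinearMap.range g →ₗ[ℝ] W)
  have htend : Filter.Tendsto (fun n => (⟨g ⟨w n, hwW n⟩, ⟨_, rfl⟩⟩ : LinearMap.range g))
      Filter.atTop (𝓝 ⟨r, hrmem⟩) := by
    rw [tendsto_subtype_rng]
    exact hre
  have htendW : Filter.Tendsto (fun n => (⟨w n, hwW n⟩ : W)) Filter.atTop
      (𝓝 (e.symm ⟨r, hrmem⟩)) := by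
    have := (hsymm_cont.tendsto _).comp htend
    convert this using 2 with n
    rw [Function.comp_apply, LinearEquiv.eq_symm_apply]
    exact Subtype.ext rfl
  set q := e.symm ⟨r, hrmem⟩
  have htendC : Filter.Tendsto (fun n => w n) Filter.atTop (𝓝 (q : Fin k → ℂ)) :=
    (continuous_subtype_val.tendsto _).comp htendW
  have hfinal : Filter.Tendsto (fun n => expPi (w n)) Filter.atTop (𝓝 (expPi q)) :=
    (continuous_expPi.tendsto _).comp htendC
  have : p = expPi (q : Fin k → ℂ) := by
    refine tendsto_nhds_unique ?_ hfinal
    simpa [hwe] using hup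
  exact ⟨q, q.2, this.symm⟩

lemma piVal_isEmbedding {k : ℕ} :
    IsEmbedding (fun u : Fin k → ℂˣ => fun i => ((u i : ℂ))) := by
  constructor
  · refine isInducing_iff_nhds.2 fun u => ?_
    simp_rw [nhds_pi, Filter.pi, Filter.comap_iInf, Filter.comap_comap]
    refine iInf_congr fun i => ?_
    rw [Units.isEmbedding_val₀.isInducing.nhds_eq_comap, Filter.comap_comap]
    rfl
  · intro a b hab
    funext i
    exact Units.ext (congrFun hab i)

lemma torus_compact {k : ℕ} :
    IsCompact {u : Fin k → ℂˣ | ∀ i, ‖(u i : ℂ)‖ = 1} := by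
  rw [piVal_isEmbedding.isCompact_iff]
  have : (fun u : Fin k → ℂˣ => fun i => ((u i : ℂ))) ''
      {u : Fin k → ℂˣ | ∀ i, ‖(u i : ℂ)‖ = 1}
      = Set.pi Set.univ (fun _ : Fin k => Metric.sphere (0 : ℂ) 1) := by
    ext z
    constructor
    · rintro ⟨u, hu, rfl⟩ i _
      simpa using hu i
    · intro hz
      have hne : ∀ i, z i ≠ 0 := by
        intro i
        have := hz i (Set.mem_univ i)
        simp only [Metric.mem_sphere, dist_zero_right] at this
        intro h0; rw [h0] at this; simp at this
      refine ⟨fun i => Units.mk0 (z i) (hne i), fun i => ?_, rfl⟩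
      have := hz i (Set.mem_univ i)
      simpa using this
  rw [this]
  exact isCompact_univ_pi fun i => isCompact_sphere 0 1

lemma re_inj_of_closed {k : ℕ} (W : Submodule ℝ (Fin k → ℂ))
    (hW : ∀ v ∈ W, (∀ i : Fin k, ∃ q : ℤ, v i = 2 * Real.pi * Complex.I * q) → v = 0)
    (hcl : IsClosed (expPi '' (W : Set (Fin k → ℂ)) : Set (Fin k → ℂˣ))) :
    ∀ v ∈ W, (∀ i : Fin k, (v i).re = 0) → v = 0 := by
  intro v hv hre
  by_contra hv0
  haveI : LocallyCompactSpace ℂˣ := unitsValOpenEmb.locallyCompactSpace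
  -- the exponential as a group hom on W
  let ψ : Multiplicative ↥W →* (Fin k → ℂˣ) :=
  { toFun := fun w => expPi ((Multiplicative.toAdd w : ↥W) : Fin k → ℂ)
    map_one' := by simpa using expPi_zero
    map_mul' := fun a b => by
      simp only [toAdd_mul, Submodule.coe_add]
      exact expPi_add _ _ }
  have hψcont : Continuous ψ := continuous_expPi.comp continuous_subtype_val
  have hGset : ((ψ.range : Subgroup (Fin k → ℂˣ)) : Set (Fin k → ℂˣ))
      = expPi '' (W : Set (Fin k → ℂ)) := by
    ext u
    constructor
    · rintro ⟨w, rfl⟩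
      exact ⟨_, (Multiplicative.toAdd w).2, rfl⟩
    · rintro ⟨x, hx, rfl⟩
      exact ⟨Multiplicative.ofAdd ⟨x, hx⟩, rfl⟩
  have hGclosed : IsClosed ((ψ.range : Subgroup (Fin k → ℂˣ)) : Set (Fin k → ℂˣ)) := by
    rw [hGset]; exact hcl
  haveI : LocallyCompactSpace ↥(ψ.range) := hGclosed.locallyCompactSpace
  haveI : SigmaCompactSpace (Multiplicative ↥W) := inferInstanceAs (SigmaCompactSpace ↥W)
  let φ := ψ.rangeRestrict
  have hφcont : Continuous φ := hψcont.subtype_mk _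
  have hφsurj : Function.Surjective φ := ψ.rangeRestrict_surjective
  have hφinj : Function.Injective φ := by
    intro a b hab
    have h1 : ψ a = ψ b := congrArg Subtype.val hab
    have h2 : ((Multiplicative.toAdd a : ↥W) : Fin k → ℂ)
        = ((Multiplicative.toAdd b : ↥W) : Fin k → ℂ) :=
      expPi_inj W hW (Multiplicative.toAdd a).2 (Multiplicative.toAdd b).2 h1
    have : (Multiplicative.toAdd a : ↥W) = Multiplicative.toAdd b := Subtype.ext h2
    simpa using congrArg Multiplicative.ofAdd this
  have hopen : IsOpenMap φ := MonoidHom.isOpenMap_of_sigmaCompact φ hφsurj hφcont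
  let e : Multiplicative ↥W ≃ₜ ↥(ψ.range) :=
    Equiv.toHomeomorphOfContinuousOpen (Equiv.ofBijective φ ⟨hφinj, hφsurj⟩) hφcont hopen
  set T : Set (Fin k → ℂˣ) := {u : Fin k → ℂˣ | ∀ i, ‖(u i : ℂ)‖ = 1} with hT
  have hB : IsCompact (Subtype.val ⁻¹' T : Set ↥(ψ.range)) := by
    rw [IsEmbedding.subtypeVal.isCompact_iff, Set.image_preimage_eq_inter_range,
      Subtype.range_coe_subtype]
    exact torus_compact.inter_right hGclosed
  have hS : IsCompact (e ⁻¹' (Subtype.val ⁻¹' T)) := e.isCompact_preimage.2 hB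
  have hC : IsCompact ((fun w : Multiplicative ↥W => ((Multiplicative.toAdd w : ↥W) : Fin k → ℂ))
      '' (e ⁻¹' (Subtype.val ⁻¹' T))) := hS.image continuous_subtype_val
  obtain ⟨R, hR⟩ := hC.isBounded.subset_closedBall 0
  have hvnorm : (0:ℝ) < ‖v‖ := norm_pos_iff.2 hv0
  set s : ℝ := (|R| + 1) / ‖v‖ with hs
  have hsmem : (Multiplicative.ofAdd (⟨s • v, W.smul_mem s hv⟩ : ↥W))
      ∈ e ⁻¹' (Subtype.val ⁻¹' T) := by
    intro i
    show ‖Complex.exp ((s • v) i)‖ = 1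
    have : ((s • v) i).re = 0 := by
      simp [Pi.smul_apply, Complex.real_smul, Complex.mul_re, hre i]
    rw [Complex.norm_exp, this, Real.exp_zero]
  have hlt : ‖s • v‖ ≤ R := by
    have : (s • v) ∈ (fun w : Multiplicative ↥W => ((Multiplicative.toAdd w : ↥W) : Fin k → ℂ))
        '' (e ⁻¹' (Subtype.val ⁻¹' T)) := ⟨_, hsmem, rfl⟩
    have := hR this
    simpa [Metric.mem_closedBall, dist_zero_right] using this
  have habs : |s| = (|R| + 1) / ‖v‖ := abs_of_pos (by positivity)
  have hnorm : ‖s • v‖ = |R| + 1 := by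
    rw [norm_smul, Real.norm_eq_abs, habs, div_mul_cancel₀ _ (ne_of_gt hvnorm)]
  have := le_abs_self R
  linarith [hlt, hnorm.symm ▸ hlt]

/-- Let `W` be a real linear subspace of `ℂ^k` with `W ∩ (2πiℤ)^k = {0}`.  Then `exp(W)`
is closed in `(ℂ*)^k` if and only if `W ∩ (iℝ)^k = {0}`, i.e. the only vector of `W` all
of whose coordinates are purely imaginary is `0`. -/
theorem isClosed_expPi_image_iff
    (k : ℕ) (W : Submodule ℝ (Fin k → ℂ))
    (hW : ∀ v ∈ W, (∀ i : Fin k, ∃ q : ℤ, v i = 2 * Real.pi * Complex.I * q) → v = 0) :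
    IsClosed (expPi '' (W : Set (Fin k → ℂ)) : Set (Fin k → ℂˣ)) ↔
      (∀ v ∈ W, (∀ i : Fin k, (v i).re = 0) → v = 0) := by
  constructor
  · exact re_inj_of_closed W hW
  · exact closed_of_re_inj W
end

section
/- Let m, n be positive integers with n ≥ 2m. Let λ_0, …, λ_n ∈ ℤ^{2m}, let A be a 2m×m complex matrix whose associated real 2m×2m matrix (Re A | Im A) is invertible, and set ℓ_i = λ_i A ∈ ℂ^m for each i. Let E be a family of subsets of {0, …, n} of cardinality 2m+1 and let U = U(E). Assume that U is good with respect to the (hol)-action of ℂ^m given by the ℓ_i (i.e. this action on U is proper and U/ℂ^m is compact). Consider the (alg)-action of (ℂ*)^{2m} on ℙ^n(ℂ) given by t·[x_0 : … : x_n] = [t^{λ_0} x_0 : … : t^{λ_n} x_n]. Then U is invariant under this (ℂ*)^{2m}-action, and the orbit space U/(ℂ*)^{2m} is compact and Hausdorff. -/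
open Projectivization
open scoped LinearAlgebra.Projectivization

noncomputable instance {N : ℕ} : TopologicalSpace (ℙ ℂ (Fin N → ℂ)) :=
  inferInstanceAs (TopologicalSpace (Quotient _))

/-- Diagonal scaling of `ℂ^N` by a tuple of nonzero complex numbers,
as a linear automorphism. -/
noncomputable def diagScale {N : ℕ} (c : Fin N → ℂˣ) : (Fin N → ℂ) ≃ₗ[ℂ] (Fin N → ℂ) :=
  LinearEquiv.piCongrRight fun i => LinearEquiv.smulOfUnit (c i)

/-- The induced action of a diagonal scaling on the projective space `ℙ^{N-1}(ℂ)`. -/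
noncomputable def diagAct {N : ℕ} (c : Fin N → ℂˣ) :
    ℙ ℂ (Fin N → ℂ) → ℙ ℂ (Fin N → ℂ) :=
  Projectivization.map (diagScale c).toLinearMap (diagScale c).injective

/-- The open set `U(E) ⊆ ℙ^n(ℂ)` associated with a family `E` of subsets of `{0,…,n}`. -/
def goodSet {N : ℕ} (E : Set (Finset (Fin N))) : Set (ℙ ℂ (Fin N → ℂ)) :=
  {p | ∃ α ∈ E, ∃ (x : Fin N → ℂ) (hx : x ≠ 0),
    Projectivization.mk ℂ x hx = p ∧ ∀ i ∈ α, x i ≠ 0}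

lemma diagAct_mem_goodSet {N : ℕ} {E : Set (Finset (Fin N))} (c : Fin N → ℂˣ)
    {p : ℙ ℂ (Fin N → ℂ)} (hp : p ∈ goodSet E) : diagAct c p ∈ goodSet E := by
  obtain ⟨α, hα, x, hx, rfl, h⟩ := hp
  refine ⟨α, hα, diagScale c x, (diagScale c).map_ne_zero_iff.mpr hx, ?_, ?_⟩
  · exact (Projectivization.map_mk (diagScale c).toLinearMap (diagScale c).injective x hx).symm
  · intro i hi
    exact mul_ne_zero (Units.ne_zero (c i)) (h i hi)

section Actions

variable {m n : ℕ} (lam : Fin (n + 1) → (Fin (2 * m) → ℤ))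
  (A : Matrix (Fin (2 * m)) (Fin m) ℂ)

/-- The row vectors `ℓ_i = λ_i A ∈ ℂ^m`. -/
noncomputable def ell (i : Fin (n + 1)) : Fin m → ℂ :=
  Matrix.vecMul (fun k => ((lam i k : ℤ) : ℂ)) A

/-- The tuple of units `(e^{ℓ_0(z)}, …, e^{ℓ_n(z)})` giving the `(hol)`-action of `ℂ^m`. -/
noncomputable def holUnits (z : Fin m → ℂ) : Fin (n + 1) → ℂˣ :=
  fun i => Units.mk0 (Complex.exp (∑ j : Fin m, ell lam A i j * z j)) (Complex.exp_ne_zero _)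

/-- The restriction of the `(hol)`-action `z·[x] = [e^{ℓ_i(z)} x_i]_i` to `U(E)`. -/
noncomputable def holRest (E : Set (Finset (Fin (n + 1)))) (z : Fin m → ℂ)
    (p : goodSet E) : goodSet E :=
  ⟨diagAct (holUnits lam A z) p.1, diagAct_mem_goodSet _ p.2⟩

/-- The tuple of units `(t^{λ_0}, …, t^{λ_n})`, where `t^{λ_i} = ∏_k t_k^{λ_{i,k}}`,
giving the `(alg)`-action of `(ℂ*)^{2m}`. -/
noncomputable def algUnits (t : Fin (2 * m) → ℂˣ) : Fin (n + 1) → ℂˣ :=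
  fun i => ∏ k : Fin (2 * m), t k ^ lam i k

/-- The `(alg)`-action `t·[x_0 : … : x_n] = [t^{λ_0} x_0 : … : t^{λ_n} x_n]` of
`(ℂ*)^{2m}` on `ℙ^n(ℂ)`. -/
noncomputable def algAct (t : Fin (2 * m) → ℂˣ) :
    ℙ ℂ (Fin (n + 1) → ℂ) → ℙ ℂ (Fin (n + 1) → ℂ) :=
  diagAct (algUnits lam t)

/-- The restriction of the `(alg)`-action to `U(E)`. -/
noncomputable def algRest (E : Set (Finset (Fin (n + 1)))) (t : Fin (2 * m) → ℂˣ)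
    (p : goodSet E) : goodSet E :=
  ⟨algAct lam t p.1, diagAct_mem_goodSet _ p.2⟩

end Actions

/-! ### Auxiliary lemmas -/

section ProjTopology

open Projectivization Topology

variable {N : ℕ}

private lemma mkP_congr (v w : Fin N → ℂ) (hv : v ≠ 0) (hw : w ≠ 0) (h : v = w) :
    Projectivization.mk ℂ v hv = Projectivization.mk ℂ w hw := by subst h; rfl

lemma continuous_mkP :
    Continuous (Projectivization.mk' ℂ : {v : Fin N → ℂ // v ≠ 0} → ℙ ℂ (Fin N → ℂ)) :=
  continuous_quot_mk

/-- Scaling of nonzero vectors by a tuple of units. -/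
private def scaleNZ (c : Fin N → ℂˣ) (v : {v : Fin N → ℂ // v ≠ 0}) :
    {v : Fin N → ℂ // v ≠ 0} :=
  ⟨fun i => (c i : ℂ) * v.1 i, fun h => v.2 (funext fun i => by
    have := congrFun h i
    simp only [Pi.zero_apply] at this ⊢
    exact (mul_eq_zero.mp this).resolve_left (c i).ne_zero)⟩

private lemma continuous_scaleNZ_pair :
    Continuous fun cv : (Fin N → ℂˣ) × {v : Fin N → ℂ // v ≠ 0} => scaleNZ cv.1 cv.2 := by
  apply Continuous.subtype_mk
  apply continuous_pi
  intro i
  exact (Units.continuous_val.comp ((continuous_apply i).comp continuous_fst)).mul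
    ((continuous_apply i).comp (continuous_subtype_val.comp continuous_snd))

private lemma diagScale_apply (c : Fin N → ℂˣ) (x : Fin N → ℂ) :
    diagScale c x = fun i => (c i : ℂ) * x i := by
  funext i
  simp [diagScale, LinearEquiv.smulOfUnit, Units.smul_def, smul_eq_mul]

private lemma diagScaleL_apply (c : Fin N → ℂˣ) (x : Fin N → ℂ) :
    (diagScale c).toLinearMap x = fun i => (c i : ℂ) * x i := diagScale_apply c x

lemma diagAct_mk' (c : Fin N → ℂˣ) (v : {v : Fin N → ℂ // v ≠ 0}) :
    diagAct c (Projectivization.mk' ℂ v) = Projectivization.mk' ℂ (scaleNZ c v) := by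
  rw [Projectivization.mk'_eq_mk, Projectivization.mk'_eq_mk, diagAct,
    Projectivization.map_mk]
  exact mkP_congr _ _ _ _ (diagScale_apply c v.1)

private lemma surjective_mkP :
    Function.Surjective (Projectivization.mk' ℂ : {v : Fin N → ℂ // v ≠ 0} → ℙ ℂ (Fin N → ℂ)) :=
  fun p => Quotient.inductionOn' p fun v => ⟨v, rfl⟩

lemma isOpenMap_mkP :
    IsOpenMap (Projectivization.mk' ℂ : {v : Fin N → ℂ // v ≠ 0} → ℙ ℂ (Fin N → ℂ)) := by
  intro U hU
  have key : Projectivization.mk' ℂ ⁻¹' (Projectivization.mk' ℂ '' U) =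
      ⋃ a : ℂˣ, (fun v => scaleNZ (fun _ => a) v) ⁻¹' U := by
    ext x
    simp only [Set.mem_preimage, Set.mem_image, Set.mem_iUnion]
    constructor
    · rintro ⟨u, hu, h⟩
      rw [Projectivization.mk'_eq_mk, Projectivization.mk'_eq_mk,
        Projectivization.mk_eq_mk_iff] at h
      obtain ⟨a, ha⟩ := h
      refine ⟨a, ?_⟩
      have : scaleNZ (fun _ => a) x = u := by
        apply Subtype.ext
        funext i
        have := congrFun ha i
        simpa [scaleNZ, Units.smul_def, smul_eq_mul] using this
      rwa [this]
    · rintro ⟨a, ha⟩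
      refine ⟨scaleNZ (fun _ => a) x, ha, ?_⟩
      rw [Projectivization.mk'_eq_mk, Projectivization.mk'_eq_mk,
        Projectivization.mk_eq_mk_iff]
      exact ⟨a, funext fun i => by simp [scaleNZ, Units.smul_def, smul_eq_mul]⟩
  have hopen : IsOpen (Projectivization.mk' ℂ ⁻¹' (Projectivization.mk' ℂ '' U)) := by
    rw [key]
    exact isOpen_iUnion fun a =>
      (continuous_scaleNZ_pair.comp (Continuous.prodMk continuous_const continuous_id)).isOpen_preimage U hU
  exact (isQuotientMap_quot_mk (r := _)).isOpen_preimage.mp hopen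

lemma isQuotientMap_prodMkP {M : Type*} [TopologicalSpace M] :
    Topology.IsQuotientMap (fun p : M × {v : Fin N → ℂ // v ≠ 0} =>
      (p.1, Projectivization.mk' ℂ p.2)) :=
  (IsOpenMap.id.prodMap isOpenMap_mkP).isQuotientMap
    (continuous_id.prodMap continuous_mkP)
    (Function.surjective_id.prodMap surjective_mkP)

lemma continuous_diagAct_pair :
    Continuous fun cp : (Fin N → ℂˣ) × ℙ ℂ (Fin N → ℂ) => diagAct cp.1 cp.2 := by
  rw [isQuotientMap_prodMkP.continuous_iff]
  have : (fun cp : (Fin N → ℂˣ) × ℙ ℂ (Fin N → ℂ) => diagAct cp.1 cp.2) ∘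
      (fun p : (Fin N → ℂˣ) × {v : Fin N → ℂ // v ≠ 0} =>
        (p.1, Projectivization.mk' ℂ p.2)) =
      fun p => Projectivization.mk' ℂ (scaleNZ p.1 p.2) := by
    funext p
    exact diagAct_mk' p.1 p.2
  rw [this]
  exact continuous_mkP.comp continuous_scaleNZ_pair

lemma diagAct_one (p : ℙ ℂ (Fin N → ℂ)) : diagAct (1 : Fin N → ℂˣ) p = p := by
  induction p using Projectivization.ind with
  | h v hv =>
    rw [diagAct, Projectivization.map_mk]
    exact mkP_congr _ _ _ _ (by rw [diagScaleL_apply]; funext i; simp)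

lemma diagAct_mul (c d : Fin N → ℂˣ) (p : ℙ ℂ (Fin N → ℂ)) :
    diagAct (c * d) p = diagAct c (diagAct d p) := by
  induction p using Projectivization.ind with
  | h v hv =>
    rw [diagAct, diagAct, diagAct, Projectivization.map_mk, Projectivization.map_mk,
      Projectivization.map_mk]
    refine mkP_congr _ _ _ _ ?_
    rw [diagScaleL_apply, diagScaleL_apply, diagScaleL_apply]
    funext i
    simp [mul_assoc]

end ProjTopology

section DRest

variable {N : ℕ} (E : Set (Finset (Fin N)))

/-- The diagonal action restricted to `goodSet E`. -/
noncomputable def dRest (c : Fin N → ℂˣ) (p : goodSet E) : goodSet E :=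
  ⟨diagAct c p.1, diagAct_mem_goodSet _ p.2⟩

lemma dRest_one (p : goodSet E) : dRest E 1 p = p := Subtype.ext (diagAct_one _)

lemma dRest_mul (c d : Fin N → ℂˣ) (p : goodSet E) :
    dRest E (c * d) p = dRest E c (dRest E d p) := Subtype.ext (diagAct_mul c d _)

lemma continuous_dRest_pair :
    Continuous fun cp : (Fin N → ℂˣ) × goodSet E => dRest E cp.1 cp.2 :=
  Continuous.subtype_mk (continuous_diagAct_pair.comp
    (Continuous.prodMk continuous_fst (continuous_subtype_val.comp continuous_snd))) _

lemma continuous_dRest (c : Fin N → ℂˣ) : Continuous (dRest E c) := by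
  have h : dRest E c = (fun cp : (Fin N → ℂˣ) × goodSet E => dRest E cp.1 cp.2) ∘
      (fun p => (c, p)) := rfl
  rw [h]
  exact (continuous_dRest_pair E).comp (Continuous.prodMk continuous_const continuous_id)

end DRest

section UnitsLemmas

variable {m n : ℕ} (lam : Fin (n + 1) → (Fin (2 * m) → ℤ))
  (A : Matrix (Fin (2 * m)) (Fin m) ℂ)

lemma algUnits_one : algUnits lam (1 : Fin (2 * m) → ℂˣ) = 1 := by
  funext i
  simp [algUnits]

lemma algUnits_mul (t s : Fin (2 * m) → ℂˣ) :
    algUnits lam (t * s) = algUnits lam t * algUnits lam s := by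
  funext i
  simp [algUnits, mul_zpow, Finset.prod_mul_distrib]

lemma algUnits_inv (t : Fin (2 * m) → ℂˣ) :
    algUnits lam t⁻¹ = (algUnits lam t)⁻¹ := by
  funext i
  simp [algUnits, inv_zpow, ← Finset.prod_inv_distrib]

/-- The units `(e^{(Az)_k})_k`. -/
noncomputable def expU (z : Fin m → ℂ) : Fin (2 * m) → ℂˣ :=
  fun k => Units.mk0 (Complex.exp (∑ j, A k j * z j)) (Complex.exp_ne_zero _)

set_option maxHeartbeats 1000000 in
lemma algUnits_expU (z : Fin m → ℂ) :
    algUnits lam (expU A z) = holUnits lam A z := by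
  funext i
  apply Units.ext
  have h1 : ((algUnits lam (expU A z) i : ℂˣ) : ℂ) =
      ∏ k, Complex.exp (∑ j, A k j * z j) ^ (lam i k) := by
    show ((∏ k, (expU A z k) ^ lam i k : ℂˣ) : ℂ) = _
    rw [← Units.coeHom_apply, map_prod]
    refine Finset.prod_congr rfl fun k _ => ?_
    rw [Units.coeHom_apply, Units.val_zpow_eq_zpow_val]
    rfl
  rw [h1]
  have h2 : ∀ k : Fin (2 * m), Complex.exp (∑ j, A k j * z j) ^ (lam i k) =
      Complex.exp ((lam i k : ℂ) * ∑ j, A k j * z j) :=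
    fun k => (Complex.exp_int_mul _ _).symm
  rw [Finset.prod_congr rfl fun k _ => h2 k, ← Complex.exp_sum]
  show Complex.exp _ = ((holUnits lam A z i : ℂˣ) : ℂ)
  rw [holUnits, Units.val_mk0]
  congr 1
  calc ∑ k, (lam i k : ℂ) * ∑ j, A k j * z j
      = ∑ k, ∑ j, (lam i k : ℂ) * (A k j * z j) := by
        simp [Finset.mul_sum]
    _ = ∑ j, ∑ k, (lam i k : ℂ) * (A k j * z j) := Finset.sum_comm
    _ = ∑ j, (∑ k, (lam i k : ℂ) * A k j) * z j := by
        simp [Finset.sum_mul, mul_assoc]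
    _ = ∑ j, ell lam A i j * z j := by
        refine Finset.sum_congr rfl fun j _ => ?_
        have he : ell lam A i j = ∑ k, (lam i k : ℂ) * A k j := by
          simp [ell, Matrix.vecMul, dotProduct]
        rw [he]

end UnitsLemmas

section MatrixLemmas

private lemma sum_fin_two_mul {m : ℕ} (g : Fin (2 * m) → ℝ) :
    ∑ l, g l = ∑ j : Fin m, (g ⟨j.1, by have := j.2; omega⟩ +
      g ⟨m + j.1, by have := j.2; omega⟩) := by
  have h2 : 2 * m = m + m := two_mul m
  have e1 : ∑ l, g l = ∑ l : Fin (m + m), g (finCongr h2.symm l) :=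
    Fintype.sum_bijective (finCongr h2) (finCongr h2).bijective _ _
      (fun x => congrArg g (Fin.ext (by simp)))
  rw [e1, Fin.sum_univ_add, Finset.sum_add_distrib.symm]
  refine Finset.sum_congr rfl fun j _ => ?_
  have c1 : finCongr h2.symm (Fin.castAdd m j) =
      (⟨j.1, by have := j.2; omega⟩ : Fin (2 * m)) := Fin.ext (by simp)
  have c2 : finCongr h2.symm (Fin.natAdd m j) =
      (⟨m + j.1, by have := j.2; omega⟩ : Fin (2 * m)) := Fin.ext (by simp [Nat.add_comm])
  rw [c1, c2]

lemma exists_re_eq {m : ℕ} (A : Matrix (Fin (2 * m)) (Fin m) ℂ)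
    (hA : IsUnit (reImMat A)) (r : Fin (2 * m) → ℝ) :
    ∃ z : Fin m → ℂ, ∀ k, (∑ j, A k j * z j).re = r k := by
  obtain ⟨u, hu⟩ := hA
  obtain ⟨B, hB⟩ : ∃ B, reImMat A * B = 1 := ⟨(u⁻¹ : _ˣ).1, by rw [← hu]; exact u.mul_inv⟩
  set w : Fin (2 * m) → ℝ := B.mulVec r with hw
  refine ⟨fun j => ⟨w ⟨j.1, by have := j.2; omega⟩,
    - w ⟨m + j.1, by have := j.2; omega⟩⟩, fun k => ?_⟩
  have hmv : (reImMat A).mulVec w = r := by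
    rw [hw, Matrix.mulVec_mulVec, hB, Matrix.one_mulVec]
  have hk := congrFun hmv k
  rw [Matrix.mulVec, dotProduct] at hk
  rw [← hk, Complex.re_sum, sum_fin_two_mul (fun l => reImMat A k l * w l)]
  refine Finset.sum_congr rfl fun j _ => ?_
  have hj1 : reImMat A k ⟨j.1, by have := j.2; omega⟩ = (A k j).re := by
    show dite _ _ _ = _
    rw [dif_pos (show ((⟨j.1, by have := j.2; omega⟩ : Fin (2 * m)) : ℕ) < m from j.2)]
  have hj2 : reImMat A k ⟨m + j.1, by have := j.2; omega⟩ = (A k j).im := by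
    show dite _ _ _ = _
    rw [dif_neg (show ¬ ((⟨m + j.1, by have := j.2; omega⟩ : Fin (2 * m)) : ℕ) < m by
      show ¬ (m + j.1 < m); omega)]
    have hidx : ∀ h : m + j.1 - m < m, (⟨m + j.1 - m, h⟩ : Fin m) = j :=
      fun h => Fin.ext (by show m + j.1 - m = j.1; omega)
    rw [hidx]
  rw [hj1, hj2, Complex.mul_re]
  ring

end MatrixLemmas

section Sphere

/-- A point of the unit circle, as a unit of `ℂ`. -/
noncomputable def sphU (x : Metric.sphere (0 : ℂ) 1) : ℂˣ :=
  Units.mk0 x.1 (by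
    intro h
    have := mem_sphere_zero_iff_norm.mp x.2
    rw [h] at this
    simp at this)

lemma continuous_sphU : Continuous sphU := by
  rw [Units.continuous_iff]
  constructor
  · exact continuous_subtype_val
  · refine Continuous.inv₀ continuous_subtype_val fun x => ?_
    intro h
    have := mem_sphere_zero_iff_norm.mp x.2
    rw [h] at this
    simp at this

lemma exists_decomp {m n : ℕ} (lam : Fin (n + 1) → (Fin (2 * m) → ℤ))
    (A : Matrix (Fin (2 * m)) (Fin m) ℂ) (hA : IsUnit (reImMat A))
    (t : Fin (2 * m) → ℂˣ) :
    ∃ (z : Fin m → ℂ) (s : Fin (2 * m) → Metric.sphere (0 : ℂ) 1),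
      t = expU A z * fun k => sphU (s k) := by
  obtain ⟨z, hz⟩ := exists_re_eq A hA (fun k => Real.log ‖((t k : ℂˣ) : ℂ)‖)
  have hpos : ∀ k, 0 < ‖((t k : ℂˣ) : ℂ)‖ :=
    fun k => norm_pos_iff.mpr (t k).ne_zero
  refine ⟨z, fun k => ⟨(t k : ℂ) / Complex.exp (∑ j, A k j * z j), ?_⟩, ?_⟩
  · rw [mem_sphere_zero_iff_norm, norm_div,
      Complex.norm_exp, hz k, Real.exp_log (hpos k)]
    exact div_self (ne_of_gt (hpos k))
  · funext k
    apply Units.ext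
    show ((t k : ℂˣ) : ℂ) = Complex.exp (∑ j, A k j * z j) *
      ((t k : ℂ) / Complex.exp (∑ j, A k j * z j))
    rw [mul_comm, div_mul_cancel₀ _ (Complex.exp_ne_zero _)]

end Sphere

set_option maxHeartbeats 2000000 in
/-- Let `n ≥ 2m ≥ 2`, let `λ_0, …, λ_n ∈ ℤ^{2m}`, let `A` be a `2m × m` complex matrix
with `(Re A | Im A)` invertible, set `ℓ_i = λ_i A`, and let `E` be a family of subsets of
`{0,…,n}` of cardinality `2m+1` with `U = U(E)`.  If `U` is good with respect to the
`(hol)`-action of `ℂ^m` given by the `ℓ_i` (the action is proper and `U/ℂ^m` is compact),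
then `U` is invariant under the `(alg)`-action `t·[x] = [t^{λ_i} x_i]_i` of `(ℂ*)^{2m}`,
and the orbit space `U/(ℂ*)^{2m}` is compact and Hausdorff. -/
theorem alg_quotient_compact_hausdorff
    (m n : ℕ) (hm : 0 < m) (hn : 2 * m ≤ n)
    (lam : Fin (n + 1) → (Fin (2 * m) → ℤ))
    (A : Matrix (Fin (2 * m)) (Fin m) ℂ) (hA : IsUnit (reImMat A))
    (E : Set (Finset (Fin (n + 1)))) (hE : ∀ α ∈ E, α.card = 2 * m + 1)
    (hproper : IsProperMap (fun q : (Fin m → ℂ) × (goodSet E) =>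
        ((holRest lam A E q.1 q.2 : goodSet E), q.2)))
    (hcompact : CompactSpace
        (Quot (fun p q : goodSet E => ∃ z : Fin m → ℂ, holRest lam A E z p = q))) :
    (∀ (t : Fin (2 * m) → ℂˣ) (p : ℙ ℂ (Fin (n + 1) → ℂ)),
        p ∈ goodSet E → algAct lam t p ∈ goodSet E) ∧
    CompactSpace
      (Quot (fun p q : goodSet E => ∃ t : Fin (2 * m) → ℂˣ, algRest lam E t p = q)) ∧
    T2Space
      (Quot (fun p q : goodSet E => ∃ t : Fin (2 * m) → ℂˣ, algRest lam E t p = q)) := by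
  classical
  -- abbreviations
  set X := goodSet E
  have algRest_eq : ∀ (t : Fin (2 * m) → ℂˣ) (p : goodSet E),
      algRest lam E t p = dRest E (algUnits lam t) p := fun t p => rfl
  have holRest_eq : ∀ (z : Fin m → ℂ) (p : goodSet E),
      holRest lam A E z p = dRest E (holUnits lam A z) p := fun z p => rfl
  have algRest_mul : ∀ (t s : Fin (2 * m) → ℂˣ) (p : goodSet E),
      algRest lam E (t * s) p = algRest lam E t (algRest lam E s p) := by
    intro t s p
    rw [algRest_eq, algRest_eq, algRest_eq, algUnits_mul, dRest_mul]
  have algRest_one : ∀ p : goodSet E, algRest lam E 1 p = p := by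
    intro p
    rw [algRest_eq, algUnits_one, dRest_one]
  have continuous_algRest : ∀ t, Continuous (algRest lam E t) := by
    intro t
    have : algRest lam E t = dRest E (algUnits lam t) := funext fun p => algRest_eq t p
    rw [this]
    exact continuous_dRest E _
  -- the two relations
  set R : goodSet E → goodSet E → Prop :=
    fun p q => ∃ t : Fin (2 * m) → ℂˣ, algRest lam E t p = q with hRdef
  have requiv : Equivalence R := by
    constructor
    · intro p
      exact ⟨1, algRest_one p⟩
    · rintro p q ⟨t, rfl⟩
      exact ⟨t⁻¹, by rw [← algRest_mul, inv_mul_cancel, algRest_one]⟩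
    · rintro p q r ⟨t, rfl⟩ ⟨s, rfl⟩
      exact ⟨s * t, algRest_mul s t p⟩
  -- hol orbits are contained in alg orbits
  have hol_sub : ∀ (z : Fin m → ℂ) (p : goodSet E),
      algRest lam E (expU A z) p = holRest lam A E z p := by
    intro z p
    rw [algRest_eq, holRest_eq, algUnits_expU]
  -- Part 1: invariance
  have part1 : ∀ (t : Fin (2 * m) → ℂˣ) (p : ℙ ℂ (Fin (n + 1) → ℂ)),
      p ∈ goodSet E → algAct lam t p ∈ goodSet E :=
    fun t p hp => diagAct_mem_goodSet _ hp
  -- Part 2: compactness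
  have part2 : CompactSpace
      (Quot (fun p q : goodSet E => ∃ t : Fin (2 * m) → ℂˣ, algRest lam E t p = q)) := by
    set g : Quot (fun p q : goodSet E => ∃ z : Fin m → ℂ, holRest lam A E z p = q) →
        Quot (fun p q : goodSet E => ∃ t : Fin (2 * m) → ℂˣ, algRest lam E t p = q) :=
      Quot.lift (Quot.mk _) (by
        rintro p q ⟨z, hz⟩
        exact Quot.sound ⟨expU A z, by rw [hol_sub, hz]⟩) with hg
    have gc : Continuous g := continuous_quot_lift _ continuous_quot_mk
    have gs : Function.Surjective g := by
      intro q
      obtain ⟨p, rfl⟩ := Quot.exists_rep q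
      exact ⟨Quot.mk _ p, rfl⟩
    have hc : IsCompact (Set.range g) := isCompact_range gc
    rw [Set.range_eq_univ.mpr gs] at hc
    exact ⟨hc⟩
  -- openness of the quotient map
  have hopen : IsOpenMap (Quot.mk
      (fun p q : goodSet E => ∃ t : Fin (2 * m) → ℂˣ, algRest lam E t p = q)) := by
    intro V hV
    set QM := Quot.mk (fun p q : goodSet E => ∃ t : Fin (2 * m) → ℂˣ, algRest lam E t p = q)
    have key : QM ⁻¹' (QM '' V) = ⋃ t : Fin (2 * m) → ℂˣ, (algRest lam E t) ⁻¹' V := by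
      ext x
      simp only [Set.mem_preimage, Set.mem_image, Set.mem_iUnion]
      constructor
      · rintro ⟨v, hv, he⟩
        have hr : R v x := requiv.eqvGen_iff.mp (Quot.eqvGen_exact he)
        obtain ⟨t, ht⟩ := hr
        refine ⟨t⁻¹, ?_⟩
        rw [← ht, ← algRest_mul, inv_mul_cancel, algRest_one]
        exact hv
      · rintro ⟨t, ht⟩
        refine ⟨algRest lam E t x, ht, ?_⟩
        exact Quot.sound ⟨t⁻¹, by rw [← algRest_mul, inv_mul_cancel, algRest_one]⟩
    have : IsOpen (QM ⁻¹' (QM '' V)) := by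
      rw [key]
      exact isOpen_iUnion fun t => (continuous_algRest t).isOpen_preimage V hV
    exact (isQuotientMap_quot_mk (r := _)).isOpen_preimage.mp this
  -- the hol-orbit relation is closed
  have hGhol : IsClosed {pq : goodSet E × goodSet E |
      ∃ z : Fin m → ℂ, holRest lam A E z pq.1 = pq.2} := by
    have h1 : IsClosed (Set.range fun q : (Fin m → ℂ) × (goodSet E) =>
        ((holRest lam A E q.1 q.2 : goodSet E), q.2)) :=
      hproper.isClosedMap.isClosed_range
    have h2 : {pq : goodSet E × goodSet E |
        ∃ z : Fin m → ℂ, holRest lam A E z pq.1 = pq.2} =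
        Prod.swap ⁻¹' (Set.range fun q : (Fin m → ℂ) × (goodSet E) =>
          ((holRest lam A E q.1 q.2 : goodSet E), q.2)) := by
      ext ⟨p, q⟩
      simp only [Set.mem_setOf_eq, Set.mem_preimage, Set.mem_range, Prod.swap_prod_mk,
        Prod.mk.injEq]
      constructor
      · rintro ⟨z, hz⟩
        exact ⟨(z, p), hz, rfl⟩
      · rintro ⟨⟨z, p'⟩, h1', h2'⟩
        subst h2'
        exact ⟨z, h1'⟩
    rw [h2]
    exact h1.preimage continuous_swap
  -- the alg-orbit relation is closed
  haveI : CompactSpace (Metric.sphere (0 : ℂ) 1) := Metric.sphere.compactSpace _ _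
  have hGalg : IsClosed {pq : goodSet E × goodSet E | R pq.1 pq.2} := by
    set S := Fin (2 * m) → (Metric.sphere (0 : ℂ) 1)
    set aS : S → (Fin (n + 1) → ℂˣ) :=
      fun s => algUnits lam (fun k => sphU (s k)) with haS
    have haScont : Continuous fun s : S => (aS s)⁻¹ := by
      refine continuous_pi fun i => ?_
      refine Continuous.inv ?_
      show Continuous fun s : S => ∏ k, sphU (s k) ^ lam i k
      exact continuous_finset_prod _ fun k _ =>
        (continuous_sphU.comp (continuous_apply k)).zpow _
    set Ψ : S × (goodSet E × goodSet E) → goodSet E × goodSet E :=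
      fun sq => (sq.2.1, dRest E ((aS sq.1)⁻¹) sq.2.2) with hΨdef
    have hΨ : Continuous Ψ := by
      refine Continuous.prodMk (continuous_fst.comp continuous_snd) ?_
      have hc : (fun sq : S × (goodSet E × goodSet E) => dRest E ((aS sq.1)⁻¹) sq.2.2) =
          (fun cp : (Fin (n + 1) → ℂˣ) × goodSet E => dRest E cp.1 cp.2) ∘
            (fun sq : S × (goodSet E × goodSet E) => ((aS sq.1)⁻¹, sq.2.2)) := rfl
      show Continuous (fun sq : S × (goodSet E × goodSet E) => dRest E ((aS sq.1)⁻¹) sq.2.2)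
      rw [hc]
      exact (continuous_dRest_pair E).comp
        (Continuous.prodMk (haScont.comp continuous_fst)
          (continuous_snd.comp continuous_snd))
    have himg : {pq : goodSet E × goodSet E | R pq.1 pq.2} =
        Prod.snd '' (Ψ ⁻¹' {pq : goodSet E × goodSet E |
          ∃ z : Fin m → ℂ, holRest lam A E z pq.1 = pq.2}) := by
      ext ⟨pp, qq⟩
      simp only [Set.mem_setOf_eq, Set.mem_image, Set.mem_preimage]
      constructor
      · rintro ⟨t, rfl⟩
        obtain ⟨z, s, hts⟩ := exists_decomp lam A hA t
        refine ⟨(s, pp, algRest lam E t pp), ⟨z, ?_⟩, rfl⟩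
        show holRest lam A E z pp = dRest E ((aS s)⁻¹) (algRest lam E t pp)
        rw [algRest_eq, ← dRest_mul, holRest_eq]
        congr 1
        rw [hts, algUnits_mul, algUnits_expU]
        show holUnits lam A z = (aS s)⁻¹ * (holUnits lam A z * aS s)
        rw [mul_comm (holUnits lam A z) (aS s), ← mul_assoc, inv_mul_cancel, one_mul]
      · rintro ⟨⟨s, pq'⟩, ⟨z, hz⟩, heq⟩
        obtain rfl : pq' = (pp, qq) := heq
        refine ⟨expU A z * fun k => sphU (s k), ?_⟩
        have hz' : holRest lam A E z pp = dRest E ((aS s)⁻¹) qq := hz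
        have hqq : dRest E (aS s) (dRest E ((aS s)⁻¹) qq) = qq := by
          rw [← dRest_mul, mul_inv_cancel, dRest_one]
        rw [← hqq, ← hz', algRest_eq, algUnits_mul, algUnits_expU, holRest_eq]
        show dRest E ((holUnits lam A z) * aS s) pp = dRest E (aS s) (dRest E (holUnits lam A z) pp)
        rw [mul_comm (holUnits lam A z) (aS s), dRest_mul]
    rw [himg]
    exact isClosedMap_snd_of_compactSpace _ (hGhol.preimage hΨ)
  -- Part 3: Hausdorff
  have part3 : T2Space
      (Quot (fun p q : goodSet E => ∃ t : Fin (2 * m) → ℂˣ, algRest lam E t p = q)) := by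
    constructor
    intro a b hab
    obtain ⟨p, rfl⟩ := Quot.exists_rep a
    obtain ⟨q, rfl⟩ := Quot.exists_rep b
    have hpq : (p, q) ∈ {pq : goodSet E × goodSet E | R pq.1 pq.2}ᶜ := by
      intro h
      exact hab (Quot.sound h)
    obtain ⟨U, V, hU, hV, hpU, hqV, hsub⟩ :=
      isOpen_prod_iff.mp hGalg.isOpen_compl p q hpq
    refine ⟨Quot.mk _ '' U, Quot.mk _ '' V, hopen U hU, hopen V hV,
      ⟨p, hpU, rfl⟩, ⟨q, hqV, rfl⟩, ?_⟩
    rw [Set.disjoint_left]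
    rintro x ⟨u, hu, rfl⟩ ⟨v, hv, he⟩
    have hr : R v u := requiv.eqvGen_iff.mp (Quot.eqvGen_exact he)
    exact hsub (Set.mk_mem_prod hu hv) (requiv.symm hr)
  exact ⟨part1, part2, part3⟩
end
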